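/- Let D_n(ω) = ∑_{k=1}^n e^{ikω} and Δ_{ℓ,n}(ω) = (2πn)^{-1}(D_n(ω + π/(ℓn)) − D_n(ω)). There exists a constant C such that for all n, ℓ ≥ 1 and all ω with 0 < ω ≤ ω + π/(ℓn) ≤ π, |Δ_{ℓ,n}(ω)| ≤ C ℓ^{-1}(1 + nω)^{-1}. -/

import Mathlib

open Real

/-- The Dirichlet kernel `D_n(ω) = ∑_{k=1}^n e^{ikω}`. -/
noncomputable def dirichletKernel (n : ℕ) (ω : ℝ) : ℂ :=
  ∑ k ∈ Finset.Icc 1 n, Complex.exp (Complex.I * k * ω)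

/-- `Δ_{ℓ,n}(ω) = (2πn)⁻¹ (D_n(ω + π/(ℓn)) − D_n(ω))`. -/
noncomputable def deltaKernel (l n : ℕ) (ω : ℝ) : ℂ :=
  ((2 * π * n : ℝ)⁻¹ : ℂ) * (dirichletKernel n (ω + π / (l * n)) - dirichletKernel n ω)

lemma norm_exp_I_mul_sub_one (x : ℝ) :
    ‖Complex.exp (Complex.I * x) - 1‖ = 2 * |Real.sin (x / 2)| := by
  have h : Complex.exp (Complex.I * x) - 1 = Complex.mk (Real.cos x - 1) (Real.sin x) := by
    rw [mul_comm, Complex.exp_mul_I]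
    apply Complex.ext <;>
      simp [Complex.cos_ofReal_re, Complex.sin_ofReal_re, Complex.cos_ofReal_im,
        Complex.sin_ofReal_im]
  rw [h, Complex.norm_def, Complex.normSq_mk]
  have h2 := Real.cos_sq (x/2)
  have h3 := Real.sin_sq_add_cos_sq (x/2)
  have heq : (Real.cos x - 1) * (Real.cos x - 1) + Real.sin x * Real.sin x
      = (2 * |Real.sin (x/2)|)^2 := by
    have h4 := Real.sin_sq_add_cos_sq x
    rw [mul_pow, sq_abs]
    have hx : (2:ℝ) * (x/2) = x := by ring
    rw [hx] at h2
    nlinarith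
  rw [heq, Real.sqrt_sq (by positivity)]

lemma norm_exp_I_mul_sub_one_le {x : ℝ} (hx : 0 ≤ x) :
    ‖Complex.exp (Complex.I * x) - 1‖ ≤ x := by
  rw [norm_exp_I_mul_sub_one]
  have h1 : |Real.sin (x/2)| ≤ |x/2| := Real.abs_sin_le_abs
  calc 2 * |Real.sin (x/2)| ≤ 2 * |x/2| := by linarith
    _ = x := by rw [abs_of_nonneg (by linarith)]; ring

lemma le_norm_exp_I_mul_sub_one {x : ℝ} (h0 : 0 < x) (h1 : x ≤ π) :
    2 * x / π ≤ ‖Complex.exp (Complex.I * x) - 1‖ := by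
  rw [norm_exp_I_mul_sub_one]
  have hπ := Real.pi_pos
  have hs : 2 / π * (x/2) ≤ Real.sin (x/2) := Real.mul_le_sin (by linarith) (by linarith)
  rw [show 2 / π * (x/2) = x / π from by ring, div_le_iff₀ hπ] at hs
  have habs : Real.sin (x/2) ≤ |Real.sin (x/2)| := le_abs_self _
  rw [div_le_iff₀ hπ]
  nlinarith

lemma norm_exp_I_real (t : ℝ) : ‖Complex.exp (Complex.I * t)‖ = 1 := by
  rw [mul_comm]
  exact Complex.norm_exp_ofReal_mul_I t

lemma exp_pow (ω : ℝ) (k : ℕ) :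
    Complex.exp (Complex.I * k * ω) = Complex.exp (Complex.I * ω) ^ k := by
  rw [← Complex.exp_nat_mul]
  ring_nf

lemma partial_sum_bound {ω : ℝ} (h0 : 0 < ω) (h1 : ω ≤ π) (m : ℕ) :
    ‖∑ i ∈ Finset.range m, Complex.exp (Complex.I * ((i:ℂ)+1) * ω)‖ ≤ π / ω := by
  have hlow : 2 * ω / π ≤ ‖Complex.exp (Complex.I * ω) - 1‖ :=
    le_norm_exp_I_mul_sub_one h0 h1
  set z := Complex.exp (Complex.I * ω) with hz
  have hzk : ∀ i : ℕ, Complex.exp (Complex.I * ((i:ℂ)+1) * ω) = z ^ (i+1) := by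
    intro i
    have := exp_pow ω (i+1)
    push_cast at this ⊢
    rw [← this]
  have habs : ‖z‖ = 1 := norm_exp_I_real ω
  simp_rw [hzk]
  have tele : (∑ i ∈ Finset.range m, z ^ (i+1)) * (z - 1) = z ^ (m+1) - z := by
    rw [Finset.sum_mul]
    rw [Finset.sum_congr rfl (fun i _ => by ring :
      ∀ i ∈ Finset.range m, z^(i+1)*(z-1) = z^(i+1+1) - z^(i+1)),
      Finset.sum_range_sub (fun i => z^(i+1))]
    simp
  have hb : ‖∑ i ∈ Finset.range m, z ^ (i+1)‖ * ‖z - 1‖ ≤ 2 := by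
    rw [← norm_mul, tele]
    calc ‖z^(m+1) - z‖ ≤ ‖z^(m+1)‖ + ‖z‖ := norm_sub_le _ _
      _ = 2 := by simp [norm_pow, habs]; norm_num
  have hπ := Real.pi_pos
  rw [div_le_iff₀ hπ] at hlow
  rw [le_div_iff₀ h0]
  nlinarith [norm_nonneg (∑ i ∈ Finset.range m, z ^ (i+1)),
    mul_le_mul_of_nonneg_left hlow (norm_nonneg (∑ i ∈ Finset.range m, z ^ (i+1))),
    mul_le_mul_of_nonneg_right hb hπ.le]

/-- There exists a constant `C` such that for all `n, ℓ ≥ 1` and all `ω` with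
`0 < ω ≤ ω + π/(ℓn) ≤ π`, `|Δ_{ℓ,n}(ω)| ≤ C ℓ⁻¹ (1 + nω)⁻¹`. -/
theorem deltaKernel_bound :
    ∃ C : ℝ, 0 < C ∧ ∀ n l : ℕ, 1 ≤ n → 1 ≤ l → ∀ ω : ℝ,
      0 < ω → ω + π / (l * n) ≤ π →
      ‖deltaKernel l n ω‖ ≤ C * (l : ℝ)⁻¹ * (1 + n * ω)⁻¹ := by
  have hπ := Real.pi_pos
  refine ⟨2 * π, by positivity, fun n l hn hl ω hω hsum => ?_⟩
  have hN : (1:ℝ) ≤ (n:ℝ) := by exact_mod_cast hn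
  have hL : (1:ℝ) ≤ (l:ℝ) := by exact_mod_cast hl
  have hNpos : (0:ℝ) < n := by linarith
  have hLpos : (0:ℝ) < l := by linarith
  set δ : ℝ := π / ((l:ℝ) * n) with hδ
  have hδpos : 0 < δ := by positivity
  have hωπ : ω ≤ π := by linarith
  -- the summands
  set f : ℕ → ℂ := fun i => Complex.exp (Complex.I * ((i:ℂ)+1) * (δ:ℂ)) - 1 with hf
  set g : ℕ → ℂ := fun i => Complex.exp (Complex.I * ((i:ℂ)+1) * (ω:ℂ)) with hg
  -- the difference of Dirichlet kernels
  have hD : dirichletKernel n (ω + δ) - dirichletKernel n ω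
      = ∑ i ∈ Finset.range n, f i * g i := by
    unfold dirichletKernel
    rw [← Finset.sum_sub_distrib, ← Finset.Ico_add_one_right_eq_Icc, Finset.sum_Ico_eq_sum_range]
    refine Finset.sum_congr rfl fun i _ => ?_
    rw [hf, hg]
    simp only
    have h1 : (Complex.I * (↑(1+i)) * ((ω:ℝ) + δ : ℝ))
        = Complex.I * ((i:ℂ)+1) * (ω:ℂ) + Complex.I * ((i:ℂ)+1) * (δ:ℂ) := by
      push_cast; ring
    have h2 : (Complex.I * (↑(1+i)) * (ω:ℂ)) = Complex.I * ((i:ℂ)+1) * (ω:ℂ) := by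
      push_cast; ring
    rw [h1, h2, Complex.exp_add]
    ring
  -- bound on norms of f
  have hfle : ∀ i : ℕ, ‖f i‖ ≤ ((i:ℝ)+1) * δ := by
    intro i
    rw [hf]
    simp only
    have h1 : Complex.I * ((i:ℂ)+1) * (δ:ℂ) = Complex.I * ((((i:ℝ)+1) * δ : ℝ) : ℂ) := by
      push_cast; ring
    rw [h1]
    exact norm_exp_I_mul_sub_one_le (by positivity)
  -- difference bound
  have hfd : ∀ i : ℕ, ‖f (i+1) - f i‖ ≤ δ := by
    intro i
    have h1 : f (i+1) - f i
        = Complex.exp (Complex.I * ((i:ℂ)+1) * (δ:ℂ)) * (Complex.exp (Complex.I * (δ:ℂ)) - 1) := by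
      rw [hf]
      simp only
      have h2 : Complex.I * ((((i+1:ℕ)):ℂ)+1) * (δ:ℂ)
          = Complex.I * ((i:ℂ)+1) * (δ:ℂ) + Complex.I * (δ:ℂ) := by push_cast; ring
      rw [h2, Complex.exp_add]
      ring
    rw [h1, norm_mul]
    have h3 : Complex.I * ((i:ℂ)+1) * (δ:ℂ) = Complex.I * ((((i:ℝ)+1) * δ : ℝ) : ℂ) := by
      push_cast; ring
    rw [h3, norm_exp_I_real, one_mul]
    exact norm_exp_I_mul_sub_one_le hδpos.le
  -- norm of g partial sums
  have hG : ∀ m : ℕ, ‖∑ i ∈ Finset.range m, g i‖ ≤ π / ω :=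
    fun m => partial_sum_bound hω hωπ m
  -- Bound 1 : crude
  have hB1 : ‖∑ i ∈ Finset.range n, f i * g i‖ ≤ (n:ℝ) * ((n:ℝ) * δ) := by
    calc ‖∑ i ∈ Finset.range n, f i * g i‖ ≤ ∑ i ∈ Finset.range n, ‖f i * g i‖ :=
          norm_sum_le _ _
      _ ≤ ∑ _i ∈ Finset.range n, (n:ℝ) * δ := by
          refine Finset.sum_le_sum fun i hi => ?_
          rw [norm_mul]
          have hgi : ‖g i‖ = 1 := by
            rw [hg]
            simp only
            have h3 : Complex.I * ((i:ℂ)+1) * (ω:ℂ) = Complex.I * ((((i:ℝ)+1) * ω : ℝ) : ℂ) := by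
              push_cast; ring
            rw [h3]
            exact norm_exp_I_real _
          rw [hgi, mul_one]
          refine (hfle i).trans ?_
          have : (i:ℝ) + 1 ≤ (n:ℝ) := by
            have := Finset.mem_range.mp hi
            exact_mod_cast Nat.succ_le_of_lt this
          nlinarith [hδpos.le]
      _ = (n:ℝ) * ((n:ℝ) * δ) := by
          rw [Finset.sum_const, Finset.card_range]; push_cast; ring
  -- Bound 2 : Abel summation
  have hB2 : ‖∑ i ∈ Finset.range n, f i * g i‖ ≤ 2 * (n:ℝ) * δ * (π / ω) := by
    have habel := Finset.sum_range_by_parts f g n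
    simp only [smul_eq_mul] at habel
    rw [habel]
    have hlast : ‖f (n-1) * ∑ i ∈ Finset.range n, g i‖ ≤ (n:ℝ) * δ * (π / ω) := by
      rw [norm_mul]
      have h1 : ‖f (n-1)‖ ≤ (n:ℝ) * δ := by
        refine (hfle (n-1)).trans ?_
        have : ((n-1 : ℕ):ℝ) + 1 = (n:ℝ) := by
          have := Nat.succ_pred_eq_of_pos (Nat.lt_of_lt_of_le Nat.zero_lt_one hn)
          exact_mod_cast congrArg (Nat.cast : ℕ → ℝ) this
        rw [this]
      exact mul_le_mul h1 (hG n) (norm_nonneg _) (by positivity)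
    have hrest : ‖∑ i ∈ Finset.range (n-1), (f (i+1) - f i) * ∑ j ∈ Finset.range (i+1), g j‖
        ≤ ((n:ℝ) - 1) * (δ * (π / ω)) := by
      calc ‖∑ i ∈ Finset.range (n-1), (f (i+1) - f i) * ∑ j ∈ Finset.range (i+1), g j‖
          ≤ ∑ i ∈ Finset.range (n-1), ‖(f (i+1) - f i) * ∑ j ∈ Finset.range (i+1), g j‖ :=
            norm_sum_le _ _
        _ ≤ ∑ _i ∈ Finset.range (n-1), δ * (π / ω) := by
            refine Finset.sum_le_sum fun i _ => ?_
            rw [norm_mul]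
            exact mul_le_mul (hfd i) (hG (i+1)) (norm_nonneg _) hδpos.le
        _ = ((n-1:ℕ):ℝ) * (δ * (π / ω)) := by
            rw [Finset.sum_const, Finset.card_range, nsmul_eq_mul]
        _ ≤ ((n:ℝ) - 1) * (δ * (π / ω)) := by
            have h1 : ((n-1:ℕ):ℝ) ≤ (n:ℝ) - 1 := by
              rw [Nat.cast_sub hn]; norm_num
            have h2 : (0:ℝ) ≤ δ * (π / ω) := by positivity
            nlinarith
    calc ‖f (n-1) * ∑ i ∈ Finset.range n, g i
          - ∑ i ∈ Finset.range (n-1), (f (i+1) - f i) * ∑ j ∈ Finset.range (i+1), g j‖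
        ≤ ‖f (n-1) * ∑ i ∈ Finset.range n, g i‖
          + ‖∑ i ∈ Finset.range (n-1), (f (i+1) - f i) * ∑ j ∈ Finset.range (i+1), g j‖ :=
          norm_sub_le _ _
      _ ≤ (n:ℝ) * δ * (π / ω) + ((n:ℝ) - 1) * (δ * (π / ω)) := add_le_add hlast hrest
      _ ≤ 2 * (n:ℝ) * δ * (π / ω) := by nlinarith [hδpos.le, div_nonneg hπ.le hω.le, hN]
  -- now the final computation
  set a := ‖∑ i ∈ Finset.range n, f i * g i‖ with ha
  have hanneg : 0 ≤ a := norm_nonneg _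
  have hnorm : ‖deltaKernel l n ω‖ = (2 * π * (n:ℝ))⁻¹ * a := by
    unfold deltaKernel
    rw [norm_mul, hD]
    congr 1
    rw [norm_inv, Complex.norm_real, Real.norm_of_nonneg (by positivity)]
  rw [hnorm]
  have h2 : (2*π*(n:ℝ))⁻¹ * a = a / (2*π*(n:ℝ)) := by ring
  have h3 : 2*π*((l:ℝ))⁻¹*(1+(n:ℝ)*ω)⁻¹ = (2*π) / ((l:ℝ)*(1+(n:ℝ)*ω)) := by
    rw [div_eq_mul_inv, mul_inv]; ring
  rw [h2, h3, div_le_div_iff₀ (by positivity) (by positivity)]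
  -- goal : a * (l * (1 + n*ω)) ≤ 2π * (2π n)
  have hδval : δ * ((l:ℝ) * (n:ℝ)) = π := by
    rw [hδ]; field_simp
  rcases le_total ((n:ℝ) * ω) 1 with hc | hc
  · -- use crude bound : a ≤ n * (n * δ)
    have key : a * ((l:ℝ)) ≤ π * (n:ℝ) := by
      have := mul_le_mul_of_nonneg_right hB1 hLpos.le
      calc a * (l:ℝ) ≤ (n:ℝ) * ((n:ℝ) * δ) * (l:ℝ) := this
        _ = (n:ℝ) * (δ * ((l:ℝ) * (n:ℝ))) := by ring
        _ = π * (n:ℝ) := by rw [hδval]; ring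
    have h5 : (1:ℝ) + (n:ℝ)*ω ≤ 2 := by linarith
    have h6 : a * (l:ℝ) * (1+(n:ℝ)*ω) ≤ π*(n:ℝ)*2 :=
      mul_le_mul key h5 (by positivity) (by positivity)
    nlinarith [h6, mul_pos hπ hNpos, Real.pi_gt_three]
  · -- use Abel bound : a ≤ 2 n δ π/ω
    have key : a * ((l:ℝ) * ω) ≤ 2 * π^2 := by
      have h4 : 2 * (n:ℝ) * δ * (π / ω) * ((l:ℝ) * ω) = 2 * π * (δ * ((l:ℝ) * (n:ℝ))) := by
        field_simp
      have := mul_le_mul_of_nonneg_right hB2 (by positivity : (0:ℝ) ≤ (l:ℝ) * ω)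
      rw [h4, hδval] at this
      calc a * ((l:ℝ) * ω) ≤ 2 * π * π := this
        _ = 2 * π^2 := by ring
    have h5 : (1:ℝ) + (n:ℝ)*ω ≤ 2*((n:ℝ)*ω) := by linarith
    nlinarith [mul_le_mul_of_nonneg_left h5 (mul_nonneg hanneg hLpos.le),
      mul_le_mul_of_nonneg_left key (show (0:ℝ) ≤ 2*(n:ℝ) by positivity)]
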